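/- arXiv:1008.2518 — 6 statements merged into one kernel-verified Lean document; each statement's English description precedes it below -/
import Mathlib

section
/- If R₁ = s/(d μ/(k_d N_d) + (k/k_d) δ b/q) > 1, then the point with x₂* = s/(d + k(N_d δ/μ)(b/q)), y₂* = b/q, v₂* = (N_d δ/μ)(b/q), z₂* = (δ/p)(k_d N_d x₂*/μ - 1) is an equilibrium of the system with all four coordinates strictly positive. Moreover z₂* = (δ/p)(R₁ - 1). -/
/-- If R₁ > 1, then E₂ is an equilibrium with all coordinates positive, and
z₂* = (δ/p)(R₁ - 1). -/
theorem E2_is_equilibrium (s d k kd Nd δ μ p q b : ℝ)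
    (hs : 0 < s) (hd : 0 < d) (hk : 0 < k) (hkd : 0 < kd) (hNd : 0 < Nd)
    (hδ : 0 < δ) (hμ : 0 < μ) (hp : 0 < p) (hq : 0 < q) (hb : 0 < b)
    (hR1 : 1 < s / (d * μ / (kd * Nd) + (k / kd) * δ * (b / q))) :
    let x₂ := s / (d + k * (Nd * δ / μ) * (b / q))
    let y₂ := b / q
    let v₂ := (Nd * δ / μ) * (b / q)
    let z₂ := (δ / p) * (kd * Nd * x₂ / μ - 1)
    0 < x₂ ∧ 0 < y₂ ∧ 0 < v₂ ∧ 0 < z₂ ∧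
    (0 : ℝ) = s - d * x₂ - k * x₂ * v₂ ∧
    (0 : ℝ) = kd * x₂ * v₂ - δ * y₂ - p * y₂ * z₂ ∧
    (0 : ℝ) = Nd * δ * y₂ - μ * v₂ ∧
    (0 : ℝ) = q * y₂ * z₂ - b * z₂ ∧
    z₂ = (δ / p) * (s / (d * μ / (kd * Nd) + (k / kd) * δ * (b / q)) - 1) := by
  intro x₂ y₂ v₂ z₂
  have hden : 0 < d + k * (Nd * δ / μ) * (b / q) := by positivity
  have hx : 0 < x₂ := div_pos hs hden
  have key : kd * Nd * x₂ / μ = s / (d * μ / (kd * Nd) + (k / kd) * δ * (b / q)) := by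
    show kd * Nd * (s / (d + k * (Nd * δ / μ) * (b / q))) / μ = _
    have h1 : 0 < d * μ / (kd * Nd) + (k / kd) * δ * (b / q) := by positivity
    rw [div_eq_div_iff (by positivity) h1.ne']
    field_simp
  have hz : 0 < z₂ := by
    have : (0:ℝ) < kd * Nd * x₂ / μ - 1 := by rw [key]; linarith
    exact mul_pos (div_pos hδ hp) this
  refine ⟨hx, by positivity, by positivity, hz, ?_, ?_, ?_, ?_, ?_⟩
  · show (0:ℝ) = s - d * (s / (d + k * (Nd * δ / μ) * (b / q))) -
      k * (s / (d + k * (Nd * δ / μ) * (b / q))) * ((Nd * δ / μ) * (b / q))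
    field_simp
    ring
  · show (0:ℝ) = kd * x₂ * ((Nd * δ / μ) * (b / q)) - δ * (b / q) -
      p * (b / q) * ((δ / p) * (kd * Nd * x₂ / μ - 1))
    field_simp
    ring
  · show (0:ℝ) = Nd * δ * (b / q) - μ * ((Nd * δ / μ) * (b / q))
    field_simp
    ring
  · show (0:ℝ) = q * (b / q) * z₂ - b * z₂
    field_simp
    ring
  · show z₂ = _
    rw [show z₂ = (δ / p) * (kd * Nd * x₂ / μ - 1) from rfl, key]
end

section
/- Any equilibrium (x*, y*, v*, z*) of the system with all coordinates strictly positive must equal E₂: x* = s/(d + k(N_dδ/μ)(b/q)), y* = b/q, v* = (N_dδ/μ)(b/q), z* = (δ/p)(k_d N_d x*/μ - 1); such an equilibrium exists iff R₁ > 1. -/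
set_option maxHeartbeats 2000000 in
/-- Any strictly positive equilibrium equals E₂; such an equilibrium exists iff R₁ > 1. -/
theorem E2_unique (s d k kd Nd δ μ p q b : ℝ)
    (hs : 0 < s) (hd : 0 < d) (hk : 0 < k) (hkd : 0 < kd) (hNd : 0 < Nd)
    (hδ : 0 < δ) (hμ : 0 < μ) (hp : 0 < p) (hq : 0 < q) (hb : 0 < b) :
    (∀ x y v z : ℝ, 0 < x → 0 < y → 0 < v → 0 < z →
      (0 : ℝ) = s - d * x - k * x * v →
      (0 : ℝ) = kd * x * v - δ * y - p * y * z →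
      (0 : ℝ) = Nd * δ * y - μ * v →
      (0 : ℝ) = q * y * z - b * z →
      x = s / (d + k * (Nd * δ / μ) * (b / q)) ∧ y = b / q ∧
        v = (Nd * δ / μ) * (b / q) ∧ z = (δ / p) * (kd * Nd * x / μ - 1)) ∧
    ((∃ x y v z : ℝ, 0 < x ∧ 0 < y ∧ 0 < v ∧ 0 < z ∧
      (0 : ℝ) = s - d * x - k * x * v ∧
      (0 : ℝ) = kd * x * v - δ * y - p * y * z ∧
      (0 : ℝ) = Nd * δ * y - μ * v ∧
      (0 : ℝ) = q * y * z - b * z) ↔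
      1 < s / (d * μ / (kd * Nd) + (k / kd) * δ * (b / q))) := by
  have hden : 0 < d + k * (Nd * δ / μ) * (b / q) := by positivity
  have hD : 0 < d * μ / (kd * Nd) + (k / kd) * δ * (b / q) := by positivity
  have hDden : d * μ / (kd * Nd) + (k / kd) * δ * (b / q)
      = μ * (d + k * (Nd * δ / μ) * (b / q)) / (kd * Nd) := by
    field_simp
  have huniq : ∀ x y v z : ℝ, 0 < x → 0 < y → 0 < v → 0 < z →
      (0 : ℝ) = s - d * x - k * x * v →
      (0 : ℝ) = kd * x * v - δ * y - p * y * z →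
      (0 : ℝ) = Nd * δ * y - μ * v →
      (0 : ℝ) = q * y * z - b * z →
      x = s / (d + k * (Nd * δ / μ) * (b / q)) ∧ y = b / q ∧
        v = (Nd * δ / μ) * (b / q) ∧ z = (δ / p) * (kd * Nd * x / μ - 1) := by
    intro x y v z hx hy hv hz e1 e2 e3 e4
    have hy' : y = b / q := by
      have h : (q * y) * z = b * z := by linarith
      have := mul_right_cancel₀ hz.ne' h
      field_simp
      linarith
    subst hy'
    have hv' : v = (Nd * δ / μ) * (b / q) := by
      field_simp at e3 ⊢
      linarith
    subst hv'
    refine ⟨?_, rfl, rfl, ?_⟩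
    · rw [eq_div_iff hden.ne']
      linarith [e1]
    · have h : p * (b / q) * z = δ * (b / q) * (kd * Nd * x / μ - 1) := by
        linear_combination e2
      have hpb : p * (b / q) ≠ 0 := by positivity
      apply mul_left_cancel₀ hpb
      rw [h]
      field_simp
  refine ⟨huniq, ?_, ?_⟩
  · rintro ⟨x, y, v, z, hx, hy, hv, hz, e1, e2, e3, e4⟩
    obtain ⟨hx', hy', hv', hz'⟩ := huniq x y v z hx hy hv hz e1 e2 e3 e4
    rw [lt_div_iff₀ hD, one_mul, hDden, div_lt_iff₀ (by positivity)]
    have h1 : 1 < kd * Nd * x / μ := by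
      by_contra h
      push_neg at h
      have : z ≤ 0 := by
        rw [hz']
        have h2 : kd * Nd * x / μ - 1 ≤ 0 := by linarith
        nlinarith [div_pos hδ hp]
      linarith
    rw [hx'] at h1
    rw [lt_div_iff₀ hμ, one_mul, ← mul_div_assoc, lt_div_iff₀ hden] at h1
    nlinarith
  · intro hR
    have hDs : d * μ / (kd * Nd) + (k / kd) * δ * (b / q) < s := by
      rwa [lt_div_iff₀ hD, one_mul] at hR
    obtain ⟨x, hxdef⟩ : ∃ x : ℝ, x = s / (d + k * (Nd * δ / μ) * (b / q)) := ⟨_, rfl⟩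
    have hx : 0 < x := by rw [hxdef]; positivity
    have hz : 0 < (δ / p) * (kd * Nd * x / μ - 1) := by
      have h1 : 1 < kd * Nd * x / μ := by
        rw [hDden, div_lt_iff₀ (by positivity)] at hDs
        rw [hxdef, lt_div_iff₀ hμ, one_mul, ← mul_div_assoc, lt_div_iff₀ hden]
        nlinarith
      have := div_pos hδ hp
      nlinarith
    clear huniq hR hDs hDden hD
    refine ⟨x, b / q, (Nd * δ / μ) * (b / q), (δ / p) * (kd * Nd * x / μ - 1),
      hx, by positivity, by positivity, hz, ?_, ?_, ?_, ?_⟩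
    · rw [hxdef]
      field_simp
      try ring
    · field_simp
      try ring
    · field_simp
      try ring
    · field_simp
      try ring
end

section
/- If R₁ > 1, then x₂* - x₁* = (μ/(k_d N_d))(R₁ - 1) > 0, i.e., the uninfected-cell level at the immune-response equilibrium exceeds that at the equilibrium without immune response. -/
/-- If R₁ > 1 then x₂* - x₁* = (μ/(k_d N_d))(R₁ - 1) > 0. -/
theorem x2_gt_x1 (s d k kd Nd δ μ b q : ℝ)
    (hs : 0 < s) (hd : 0 < d) (hk : 0 < k) (hkd : 0 < kd) (hNd : 0 < Nd)
    (hδ : 0 < δ) (hμ : 0 < μ) (hb : 0 < b) (hq : 0 < q)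
    (hR1 : 1 < s / (d * μ / (kd * Nd) + (k / kd) * δ * (b / q))) :
    s / (d + k * (Nd * δ / μ) * (b / q)) - μ / (kd * Nd)
      = (μ / (kd * Nd)) * (s / (d * μ / (kd * Nd) + (k / kd) * δ * (b / q)) - 1) ∧
    0 < s / (d + k * (Nd * δ / μ) * (b / q)) - μ / (kd * Nd) := by
  have h1 : (0:ℝ) < d + k * (Nd * δ / μ) * (b / q) := by positivity
  have h2 : (0:ℝ) < d * μ / (kd * Nd) + (k / kd) * δ * (b / q) := by positivity
  have heq : s / (d + k * (Nd * δ / μ) * (b / q)) - μ / (kd * Nd)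
      = (μ / (kd * Nd)) * (s / (d * μ / (kd * Nd) + (k / kd) * δ * (b / q)) - 1) := by
    field_simp
  refine ⟨heq, ?_⟩
  rw [heq]
  have : 0 < s / (d * μ / (kd * Nd) + (k / kd) * δ * (b / q)) - 1 := by linarith
  positivity
end

section
/- If R₁ ≤ 1 and R₀ > 1, then y₁* = (k_d/(kδ))(s - dμ/(k_d N_d)) satisfies 0 < y₁* ≤ b/q. -/
/-- If R₁ ≤ 1 < R₀, then 0 < y₁* ≤ b/q. -/
theorem y1_pos_le (s d k kd Nd δ μ b q : ℝ)
    (hs : 0 < s) (hd : 0 < d) (hk : 0 < k) (hkd : 0 < kd) (hNd : 0 < Nd)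
    (hδ : 0 < δ) (hμ : 0 < μ) (hb : 0 < b) (hq : 0 < q)
    (hR1 : s / (d * μ / (kd * Nd) + (k / kd) * δ * (b / q)) ≤ 1)
    (hR0 : 1 < s * kd * Nd / (d * μ)) :
    0 < (kd / (k * δ)) * (s - d * μ / (kd * Nd)) ∧
    (kd / (k * δ)) * (s - d * μ / (kd * Nd)) ≤ b / q := by
  have hD : 0 < d * μ / (kd * Nd) + (k / kd) * δ * (b / q) := by positivity
  have h1 : s ≤ d * μ / (kd * Nd) + (k / kd) * δ * (b / q) :=
    (div_le_one hD).mp hR1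
  have h0 : d * μ / (kd * Nd) < s := by
    rw [div_lt_iff₀ (by positivity)]
    have := (one_lt_div (by positivity : (0:ℝ) < d * μ)).mp hR0
    linarith
  constructor
  · have : 0 < s - d * μ / (kd * Nd) := by linarith
    positivity
  · rw [div_mul_eq_mul_div, div_le_div_iff₀ (by positivity) hq]
    have h2 : s - d * μ / (kd * Nd) ≤ (k / kd) * δ * (b / q) := by linarith
    have h3 : kd * (s - d * μ / (kd * Nd)) ≤ kd * ((k / kd) * δ * (b / q)) :=
      mul_le_mul_of_nonneg_left h2 hkd.le
    calc kd * (s - d * μ / (kd * Nd)) * q ≤ kd * ((k / kd) * δ * (b / q)) * q :=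
          mul_le_mul_of_nonneg_right h3 hq.le
      _ = b * (k * δ) := by field_simp
end

section
/- For positive reals x, v and positive equilibrium values x₁, v₁ with s = d x₁ + k x₁ v₁, one has (1 - x₁/x)(s - d x - k x v) = -d x (1 - x₁/x)² + k v₁ x₁ (1 - (x v)/(x₁ v₁) - x₁/x + v/v₁). -/
/-- Key algebraic identity for the Lyapunov derivative at the infected equilibrium. -/
theorem lyapunov_x_identity (s d k x₁ v₁ x v : ℝ)
    (hx₁ : 0 < x₁) (hv₁ : 0 < v₁) (hx : 0 < x) (hv : 0 < v)
    (hs : s = d * x₁ + k * x₁ * v₁) :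
    (1 - x₁ / x) * (s - d * x - k * x * v)
      = -(d * x) * (1 - x₁ / x) ^ 2
        + k * v₁ * x₁ * (1 - (x * v) / (x₁ * v₁) - x₁ / x + v / v₁) := by
  subst hs
  field_simp
  ring
end

section
/- Suppose x : [0,∞) → ℝ is continuously differentiable, x(0) ≥ 0, and satisfies x'(t) = s - d x(t) - k x(t) v(t) where s > 0, d, k > 0 and v is continuous and nonnegative. Then x(t) > 0 for all t > 0. -/
open Filter Set Topology

/-- Positivity of the uninfected-cell component. -/
theorem x_positive (s d k : ℝ) (hs : 0 < s) (hd : 0 < d) (hk : 0 < k)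
    (x v : ℝ → ℝ) (hv : Continuous v) (hvnn : ∀ t, 0 ≤ v t)
    (hx0 : 0 ≤ x 0)
    (hx : ∀ t, 0 ≤ t → HasDerivAt x (s - d * x t - k * x t * v t) t) :
    ∀ t, 0 < t → 0 < x t := by
  have hc : ∀ t, 0 ≤ t → ContinuousAt x t := fun t ht => (hx t ht).continuousAt
  -- key: wherever x T ≤ 0 (T ≥ 0), the slope is eventually positive near T
  have key : ∀ T, 0 ≤ T → x T ≤ 0 → ∀ᶠ u in 𝓝[≠] T, 0 < slope x T u := by
    intro T hT hxT
    have h1 : d * x T ≤ 0 := mul_nonpos_of_nonneg_of_nonpos hd.le hxT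
    have h2 : k * x T * v T ≤ 0 :=
      mul_nonpos_of_nonpos_of_nonneg (mul_nonpos_of_nonneg_of_nonpos hk.le hxT) (hvnn T)
    have hpos : 0 < s - d * x T - k * x T * v T := by linarith
    exact (hasDerivAt_iff_tendsto_slope.mp (hx T hT)).eventually
      (eventually_gt_nhds hpos)
  intro t0 ht0
  by_contra h
  push_neg at h
  -- find t₁ ∈ (0, t0) with x t₁ > 0
  obtain ⟨t1, ht1pos, ht1lt, hxt1⟩ : ∃ t1, 0 < t1 ∧ t1 < t0 ∧ 0 < x t1 := by
    rcases eq_or_lt_of_le hx0 with hx00 | hx00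
    · have h1 : ∀ᶠ u in 𝓝[>] (0:ℝ), 0 < slope x 0 u :=
        (key 0 le_rfl hx00.ge).filter_mono (nhdsWithin_mono _ (fun u hu => ne_of_gt hu))
      have h2 : ∀ᶠ u in 𝓝[>] (0:ℝ), u < t0 :=
        eventually_nhdsWithin_of_eventually_nhds (eventually_lt_nhds ht0)
      have h3 : ∀ᶠ u in 𝓝[>] (0:ℝ), 0 < u := eventually_mem_nhdsWithin
      obtain ⟨u, ⟨hu1, hu2⟩, hu3⟩ := ((h1.and h2).and h3).exists
      refine ⟨u, hu3, hu2, ?_⟩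
      have hsl : slope x 0 u = x u / u := by
        rw [slope_def_field, ← hx00]; simp
      rw [hsl] at hu1
      have := mul_pos hu1 hu3
      rwa [div_mul_cancel₀ _ (ne_of_gt hu3)] at this
    · have h1 : ∀ᶠ u in 𝓝[>] (0:ℝ), 0 < x u :=
        eventually_nhdsWithin_of_eventually_nhds ((hc 0 le_rfl).eventually (eventually_gt_nhds hx00))
      have h2 : ∀ᶠ u in 𝓝[>] (0:ℝ), u < t0 :=
        eventually_nhdsWithin_of_eventually_nhds (eventually_lt_nhds ht0)
      have h3 : ∀ᶠ u in 𝓝[>] (0:ℝ), 0 < u := eventually_mem_nhdsWithin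
      obtain ⟨u, ⟨hu1, hu2⟩, hu3⟩ := ((h1.and h2).and h3).exists
      exact ⟨u, hu3, hu2, hu1⟩
  -- the set where x ≤ 0 on [t1, t0]
  set A := Icc t1 t0 ∩ x ⁻¹' (Iic 0) with hA
  have hcont : ContinuousOn x (Icc t1 t0) := fun u hu =>
    (hc u (ht1pos.le.trans hu.1)).continuousWithinAt
  have hAclosed : IsClosed A := hcont.preimage_isClosed_of_isClosed isClosed_Icc isClosed_Iic
  have hAcomp : IsCompact A := isCompact_Icc.of_isClosed_subset hAclosed inter_subset_left
  have hAne : A.Nonempty := ⟨t0, ⟨ht1lt.le, le_rfl⟩, h⟩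
  obtain ⟨hTmem, hTle⟩ := hAcomp.sInf_mem hAne
  set T := sInf A
  have hTlb : ∀ u ∈ A, T ≤ u := fun u hu => csInf_le hAcomp.bddBelow hu
  have hTx : x T ≤ 0 := hTle
  have ht1T : t1 < T := by
    rcases eq_or_lt_of_le hTmem.1 with he | hl
    · exact absurd (he ▸ hTx) (not_le.mpr hxt1)
    · exact hl
  -- slope positive just below T gives x u < x T ≤ 0, contradicting minimality
  have h1 : ∀ᶠ u in 𝓝[<] T, 0 < slope x T u :=
    (key T (ht1pos.le.trans hTmem.1) hTx).filter_mono
      (nhdsWithin_mono _ (fun u hu => ne_of_lt hu))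
  have h2 : ∀ᶠ u in 𝓝[<] T, t1 < u ∧ u < T :=
    (eventually_nhdsWithin_of_eventually_nhds (eventually_gt_nhds ht1T)).and
      eventually_mem_nhdsWithin
  obtain ⟨u, hu1, hu2, hu3⟩ := (h1.and h2).exists
  have hslope : slope x T u = (x u - x T) / (u - T) := slope_def_field x T u
  have huT : u - T < 0 := sub_neg.mpr hu3
  have : x u - x T < 0 := by
    by_contra hge
    push_neg at hge
    have := div_nonpos_of_nonneg_of_nonpos hge huT.le
    rw [← hslope] at this
    linarith
  have huA : u ∈ A := ⟨⟨hu2.le, hu3.le.trans hTmem.2⟩, by simp; linarith⟩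
  exact absurd (hTlb u huA) (not_le.mpr hu3)
end
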